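/- Let $p \in (0,1)$, $q = 1-p$, $0 < d \le 1 \le u$ with $u \ne d$, and set $\tilde{k}_0(n,u,d) = \lfloor n \ln(1/d)/\ln(u/d) \rfloor$. Then $A(n,u,d,p) = \sum_{k=0}^{\tilde{k}_0(n,u,d)} \binom{n}{k} (pu)^k (qd)^{n-k} \to 0$ as $n \to \infty$. -/

import Mathlib

open Filter

/-- Threshold separating losing from winning numbers of heads. -/
noncomputable def ktilde (n : ℕ) (u d : ℝ) : ℕ :=
  ⌊(n : ℝ) * Real.log (1/d) / Real.log (u/d)⌋₊

/-- Contribution of the losing outcomes to the expected payout, biased coin with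
heads probability `p` and tails probability `q = 1 - p`. -/
noncomputable def A (n : ℕ) (u d p : ℝ) : ℝ :=
  ∑ k ∈ Finset.range (ktilde n u d + 1), (n.choose k : ℝ) * (p * u)^k * ((1 - p) * d)^(n-k)

section Aux

lemma log_ud_pos {u d : ℝ} (hd0 : 0 < d) (hd1 : d ≤ 1) (hu : 1 ≤ u) (hne : u ≠ d) :
    0 < Real.log (u / d) := by
  have hdu : d < u := lt_of_le_of_ne (hd1.trans hu) (Ne.symm hne)
  apply Real.log_pos
  rw [lt_div_iff₀ hd0]; linarith

lemma ktilde_le {u d : ℝ} (hd0 : 0 < d) (hd1 : d ≤ 1) (hu : 1 ≤ u) (hne : u ≠ d) (n : ℕ) :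
    ktilde n u d ≤ n := by
  have hc := log_ud_pos hd0 hd1 hu hne
  have h1 : Real.log (1/d) ≤ Real.log (u/d) := by
    apply Real.log_le_log (by positivity)
    gcongr
  calc ktilde n u d ≤ ⌊(n:ℝ)⌋₊ := by
        apply Nat.floor_le_floor
        rw [div_le_iff₀ hc]
        calc (n:ℝ) * Real.log (1/d) ≤ (n:ℝ) * Real.log (u/d) := by
              apply mul_le_mul_of_nonneg_left h1 (by positivity)
          _ = (n:ℝ) * Real.log (u/d) := rfl
    _ = n := Nat.floor_natCast n

lemma pow_le_one_of_le_ktilde {u d : ℝ} (hd0 : 0 < d) (hd1 : d ≤ 1) (hu : 1 ≤ u) (hne : u ≠ d)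
    {n k : ℕ} (hk : k ≤ ktilde n u d) : u ^ k * d ^ (n - k) ≤ 1 := by
  have hc := log_ud_pos hd0 hd1 hu hne
  have hu0 : (0:ℝ) < u := lt_of_lt_of_le one_pos hu
  have hkn : k ≤ n := hk.trans (ktilde_le hd0 hd1 hu hne n)
  have h0 : (k:ℝ) ≤ (n:ℝ) * Real.log (1/d) / Real.log (u/d) := by
    calc (k:ℝ) ≤ (ktilde n u d : ℝ) := by exact_mod_cast hk
      _ ≤ _ := Nat.floor_le (by
          have h1d : 0 ≤ Real.log (1/d) := Real.log_nonneg (by rw [le_div_iff₀ hd0]; linarith)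
          positivity)
  rw [le_div_iff₀ hc] at h0
  have hlog1d : Real.log (1/d) = -Real.log d := by
    rw [one_div, Real.log_inv]
  have hlogud : Real.log (u/d) = Real.log u - Real.log d := Real.log_div (by positivity) hd0.ne'
  have hcast : ((n - k : ℕ) : ℝ) = (n:ℝ) - k := by push_cast [Nat.cast_sub hkn]; ring
  have key : (k:ℝ) * Real.log u + ((n:ℝ) - k) * Real.log d ≤ 0 := by
    rw [hlog1d, hlogud] at h0; nlinarith [h0]
  have h1 : u ^ k * d ^ (n - k) = Real.exp ((k:ℝ) * Real.log u + ((n:ℝ) - k) * Real.log d) := by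
    rw [Real.exp_add, ← hcast]
    rw [Real.exp_nat_mul, Real.exp_nat_mul, Real.exp_log hu0, Real.exp_log hd0]
  rw [h1, ← Real.exp_zero]
  exact Real.exp_le_exp.mpr key

lemma A_le_of_theta {u d p : ℝ} (hp0 : 0 < p) (hp1 : p < 1)
    (hd0 : 0 < d) (hd1 : d ≤ 1) (hu : 1 ≤ u) (hne : u ≠ d)
    (θ : ℝ) (hθ : θ ≤ 1) (n : ℕ) :
    A n u d p ≤ (p * u ^ θ + (1 - p) * d ^ θ) ^ n := by
  have hu0 : (0:ℝ) < u := lt_of_lt_of_le one_pos hu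
  have hq0 : (0:ℝ) < 1 - p := by linarith
  have huθ : (0:ℝ) < u ^ θ := Real.rpow_pos_of_pos hu0 θ
  have hdθ : (0:ℝ) < d ^ θ := Real.rpow_pos_of_pos hd0 θ
  have step1 : A n u d p ≤
      ∑ k ∈ Finset.range (ktilde n u d + 1),
        (n.choose k : ℝ) * (p * u ^ θ)^k * ((1 - p) * d ^ θ)^(n-k) := by
    apply Finset.sum_le_sum
    intro k hkmem
    have hk : k ≤ ktilde n u d := Nat.lt_succ_iff.mp (Finset.mem_range.mp hkmem)
    have hx0 : (0:ℝ) < u ^ k * d ^ (n - k) := by positivity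
    have hx1 : u ^ k * d ^ (n - k) ≤ 1 := pow_le_one_of_le_ktilde hd0 hd1 hu hne hk
    have hmain : u ^ k * d ^ (n - k) ≤ (u ^ θ)^k * (d ^ θ)^(n-k) := by
      have h2 : (u ^ θ)^k * (d ^ θ)^(n-k) = (u ^ k * d ^ (n - k)) ^ θ := by
        rw [Real.mul_rpow (by positivity) (by positivity)]
        rw [← Real.rpow_natCast (u ^ θ) k, ← Real.rpow_natCast (d ^ θ) (n-k)]
        rw [← Real.rpow_natCast u k, ← Real.rpow_natCast d (n-k)]
        rw [← Real.rpow_mul hu0.le, ← Real.rpow_mul hd0.le,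
            ← Real.rpow_mul hu0.le, ← Real.rpow_mul hd0.le]
        rw [mul_comm θ (k:ℝ), mul_comm θ ((n-k:ℕ):ℝ)]
      rw [h2]
      calc u ^ k * d ^ (n - k) = (u ^ k * d ^ (n - k)) ^ (1:ℝ) := (Real.rpow_one _).symm
        _ ≤ (u ^ k * d ^ (n - k)) ^ θ := Real.rpow_le_rpow_of_exponent_ge hx0 hx1 hθ
    calc (n.choose k : ℝ) * (p * u)^k * ((1 - p) * d)^(n-k)
        = ((n.choose k : ℝ) * p^k * (1-p)^(n-k)) * (u ^ k * d ^ (n-k)) := by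
          rw [mul_pow, mul_pow]; ring
      _ ≤ ((n.choose k : ℝ) * p^k * (1-p)^(n-k)) * ((u ^ θ)^k * (d ^ θ)^(n-k)) := by
          apply mul_le_mul_of_nonneg_left hmain (by positivity)
      _ = (n.choose k : ℝ) * (p * u ^ θ)^k * ((1 - p) * d ^ θ)^(n-k) := by
          rw [mul_pow, mul_pow]; ring
  have step2 : ∑ k ∈ Finset.range (ktilde n u d + 1),
        (n.choose k : ℝ) * (p * u ^ θ)^k * ((1 - p) * d ^ θ)^(n-k)
      ≤ ∑ k ∈ Finset.range (n + 1),
        (n.choose k : ℝ) * (p * u ^ θ)^k * ((1 - p) * d ^ θ)^(n-k) := by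
    apply Finset.sum_le_sum_of_subset_of_nonneg
    · apply Finset.range_subset_range.mpr
      exact Nat.succ_le_succ (ktilde_le hd0 hd1 hu hne n)
    · intro k _ _; positivity
  have step3 : ∑ k ∈ Finset.range (n + 1),
        (n.choose k : ℝ) * (p * u ^ θ)^k * ((1 - p) * d ^ θ)^(n-k)
      = (p * u ^ θ + (1 - p) * d ^ θ) ^ n := by
    rw [add_pow]
    apply Finset.sum_congr rfl
    intro k _; ring
  linarith [step1, step2, step3.symm.le, step3.le]

lemma exists_theta {u d p : ℝ} (hp0 : 0 < p) (hp1 : p < 1)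
    (hd0 : 0 < d) (hd1 : d ≤ 1) (hu : 1 ≤ u) (hne : u ≠ d)
    (hL : p * Real.log u + (1 - p) * Real.log d ≠ 0) :
    ∃ θ : ℝ, θ ≤ 1 ∧ p * u ^ θ + (1 - p) * d ^ θ < 1 := by
  have hu0 : (0:ℝ) < u := lt_of_lt_of_le one_pos hu
  set lu := Real.log u with hlu
  set ld := Real.log d with hld
  set φ : ℝ → ℝ := fun θ => p * Real.exp (θ * lu) + (1 - p) * Real.exp (θ * ld) with hφ
  have hφ0 : φ 0 = 1 := by simp [hφ]
  have hφval : ∀ θ : ℝ, φ θ = p * u ^ θ + (1 - p) * d ^ θ := by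
    intro θ
    rw [Real.rpow_def_of_pos hu0, Real.rpow_def_of_pos hd0]
    simp [hφ, mul_comm]; rfl
  have hderiv : HasDerivAt φ (p * lu + (1 - p) * ld) 0 := by
    have h1 : HasDerivAt (fun θ:ℝ => Real.exp (θ * lu)) lu 0 := by
      have := ((hasDerivAt_id (0:ℝ)).mul_const lu).exp
      simpa using this
    have h2 : HasDerivAt (fun θ:ℝ => Real.exp (θ * ld)) ld 0 := by
      have := ((hasDerivAt_id (0:ℝ)).mul_const ld).exp
      simpa using this
    exact (h1.const_mul p).add (h2.const_mul (1-p))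
  rw [hasDerivAt_iff_tendsto_slope] at hderiv
  rcases hL.lt_or_gt with hneg | hpos
  · -- derivative negative: pick θ > 0 small
    have h1 : ∀ᶠ θ in nhdsWithin (0:ℝ) (Set.Ioi 0), slope φ 0 θ < 0 :=
      (hderiv.mono_left (nhdsWithin_mono _ (fun x hx => ne_of_gt hx))).eventually_lt_const hneg
    have h2 : ∀ᶠ θ in nhdsWithin (0:ℝ) (Set.Ioi 0), 0 < θ := self_mem_nhdsWithin
    have h3 : ∀ᶠ θ in nhdsWithin (0:ℝ) (Set.Ioi 0), θ < 1 :=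
      eventually_nhdsWithin_of_eventually_nhds (eventually_lt_nhds one_pos)
    obtain ⟨θ, hs, hθ0, hθ1⟩ := (h1.and (h2.and h3)).exists
    refine ⟨θ, hθ1.le, ?_⟩
    rw [← hφval]
    have hslope : slope φ 0 θ = (φ θ - 1) / θ := by
      rw [slope_def_field]; simp [hφ0]
    rw [hslope] at hs
    rcases div_neg_iff.mp hs with ⟨ha, hb⟩ | ⟨ha, hb⟩
    · linarith
    · linarith
  · -- derivative positive: pick θ < 0
    have h1 : ∀ᶠ θ in nhdsWithin (0:ℝ) (Set.Iio 0), 0 < slope φ 0 θ :=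
      (hderiv.mono_left (nhdsWithin_mono _ (fun x hx => ne_of_lt hx))).eventually_const_lt hpos
    have h2 : ∀ᶠ θ in nhdsWithin (0:ℝ) (Set.Iio 0), θ < 0 := self_mem_nhdsWithin
    obtain ⟨θ, hs, hθ0⟩ := (h1.and h2).exists
    refine ⟨θ, by linarith, ?_⟩
    rw [← hφval]
    have hslope : slope φ 0 θ = (φ θ - 1) / θ := by
      rw [slope_def_field]; simp [hφ0]
    rw [hslope] at hs
    rcases div_pos_iff.mp hs with ⟨ha, hb⟩ | ⟨ha, hb⟩
    · linarith
    · linarith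

lemma A_nonneg {u d p : ℝ} (hp0 : 0 < p) (hp1 : p < 1) (hd0 : 0 < d) (hu0 : 0 < u) (n : ℕ) :
    0 ≤ A n u d p := by
  apply Finset.sum_nonneg
  intro k _
  have h1 : (0:ℝ) ≤ 1 - p := by linarith
  positivity

end Aux

section Boundary

variable {u d p : ℝ}

/-- binomial pmf term -/
noncomputable def sb (p : ℝ) (n k : ℕ) : ℝ := (n.choose k : ℝ) * p ^ k * (1 - p) ^ (n - k)

lemma sb_nonneg (hp0 : 0 < p) (hp1 : p < 1) (n k : ℕ) : 0 ≤ sb p n k := by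
  have h1 : (0:ℝ) ≤ 1 - p := by linarith
  have := (n.choose k : ℝ)
  unfold sb; positivity

lemma sb_sum (hp0 : 0 < p) (hp1 : p < 1) (n : ℕ) :
    ∑ k ∈ Finset.range (n+1), sb p n k = 1 := by
  have h := add_pow p (1-p) n
  simp only [add_sub_cancel, one_pow] at h
  rw [show ∑ k ∈ Finset.range (n+1), sb p n k
      = ∑ m ∈ Finset.range (n+1), p ^ m * (1-p) ^ (n - m) * (n.choose m : ℝ) by
    apply Finset.sum_congr rfl; intro k _; unfold sb; ring]
  rw [← h]

/-- choose recurrence, real cast -/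
lemma choose_cast_succ (n k : ℕ) (hk : k < n) :
    ((n.choose (k+1)) : ℝ) * (k+1) = (n.choose k : ℝ) * ((n:ℝ) - k) := by
  have h := Nat.choose_succ_right_eq n k
  have h2 : ((n.choose (k+1) * (k+1) : ℕ) : ℝ) = ((n.choose k * (n - k) : ℕ) : ℝ) := by
    exact_mod_cast congrArg (Nat.cast (R := ℝ)) h
  push_cast [Nat.cast_sub hk.le] at h2
  linarith [h2]

/-- upward step for the binomial pmf -/
lemma sb_step_up (hp0 : 0 < p) (hp1 : p < 1) {n k : ℕ} (hk : k + 1 ≤ n)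
    {x : ℝ} (hx0 : 0 ≤ x) (hx : (1 - x) * ((k:ℝ)+1) * (1-p) ≤ ((n:ℝ) - k) * p) :
    sb p n k * (1 - x) ≤ sb p n (k+1) := by
  have hq0 : (0:ℝ) < 1 - p := by linarith
  have hkc := choose_cast_succ n k (by omega)
  have hsub : n - k = (n - (k+1)) + 1 := by omega
  have hC0 : (0:ℝ) ≤ (n.choose k : ℝ) := Nat.cast_nonneg _
  have hkey : (n.choose k : ℝ) * ((1-p) * (1 - x)) ≤ (n.choose (k+1) : ℝ) * p := by
    have h1 : (n.choose k : ℝ) * ((1-x)*((k:ℝ)+1)*(1-p)) ≤ (n.choose k : ℝ) * (((n:ℝ)-k)*p) :=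
      mul_le_mul_of_nonneg_left hx hC0
    have hk1 : (0:ℝ) < (k:ℝ)+1 := by positivity
    nlinarith [h1, hkc]
  calc sb p n k * (1-x) = ((n.choose k : ℝ) * ((1-p)*(1-x))) * (p^k * (1-p)^(n-(k+1))) := by
        unfold sb; rw [hsub, pow_succ]; ring
    _ ≤ ((n.choose (k+1) : ℝ) * p) * (p^k * (1-p)^(n-(k+1))) := by
        apply mul_le_mul_of_nonneg_right hkey (by positivity)
    _ = sb p n (k+1) := by unfold sb; rw [pow_succ]; ring

lemma tb_step_down (hp0 : 0 < p) (hp1 : p < 1) (hd0 : 0 < d) (hu0 : 0 < u) {n j : ℕ}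
    (hjn : j + 1 ≤ n) (hj : ((j:ℝ)+1) ≤ (n:ℝ)*p) :
    (n.choose j : ℝ) * (p*u)^j * ((1-p)*d)^(n-j)
      ≤ (d/u) * ((n.choose (j+1) : ℝ) * (p*u)^(j+1) * ((1-p)*d)^(n-(j+1))) := by
  have hq0 : (0:ℝ) < 1 - p := by linarith
  have hkc := choose_cast_succ n j (by omega)
  have hsub : n - j = (n - (j+1)) + 1 := by omega
  have hC0 : (0:ℝ) ≤ (n.choose j : ℝ) := Nat.cast_nonneg _
  have hjreal : ((j:ℝ)+1) * (1-p) ≤ ((n:ℝ)-j) * p := by nlinarith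
  have hkey : (n.choose j : ℝ) * (1-p) ≤ (n.choose (j+1) : ℝ) * p := by
    have h1 : (n.choose j : ℝ) * (((j:ℝ)+1)*(1-p)) ≤ (n.choose j : ℝ) * ((((n:ℝ)-j))*p) :=
      mul_le_mul_of_nonneg_left hjreal hC0
    have hk1 : (0:ℝ) < (j:ℝ)+1 := by positivity
    nlinarith [h1, hkc]
  have hrw : (d/u) * ((n.choose (j+1) : ℝ) * (p*u)^(j+1) * ((1-p)*d)^(n-(j+1)))
      = ((n.choose (j+1) : ℝ) * p) * d * ((p*u)^j * ((1-p)*d)^(n-(j+1))) := by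
    rw [pow_succ]; field_simp
  rw [hrw]
  calc (n.choose j : ℝ) * (p*u)^j * ((1-p)*d)^(n-j)
      = ((n.choose j : ℝ) * (1-p)) * d * ((p*u)^j * ((1-p)*d)^(n-(j+1))) := by
        rw [hsub, pow_succ]; ring
    _ ≤ ((n.choose (j+1) : ℝ) * p) * d * ((p*u)^j * ((1-p)*d)^(n-(j+1))) := by
        apply mul_le_mul_of_nonneg_right
        · apply mul_le_mul_of_nonneg_right hkey hd0.le
        · positivity

lemma my_geom_le {r : ℝ} (h0 : 0 ≤ r) (h1 : r < 1) (m : ℕ) :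
    ∑ j ∈ Finset.range m, r^j ≤ (1-r)⁻¹ := by
  rw [geom_sum_eq h1.ne m, div_le_iff_of_neg (by linarith : r - 1 < 0)]
  have h2 : (1-r)⁻¹ * (r-1) = -1 := by
    rw [inv_mul_eq_div, div_eq_iff (by linarith : (1:ℝ)-r ≠ 0)]; ring
  rw [h2]
  linarith [pow_nonneg h0 m]

lemma tb_geom (hp0 : 0 < p) (hp1 : p < 1) (hd0 : 0 < d) (hu0 : 0 < u) {n k0 : ℕ}
    (hk0n : k0 ≤ n) (hk0 : (k0:ℝ) ≤ (n:ℝ)*p) :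
    ∀ j, j ≤ k0 →
      (n.choose (k0-j) : ℝ) * (p*u)^(k0-j) * ((1-p)*d)^(n-(k0-j))
        ≤ (d/u)^j * ((n.choose k0 : ℝ) * (p*u)^k0 * ((1-p)*d)^(n-k0)) := by
  intro j
  induction j with
  | zero => intro _; simp
  | succ j ih =>
    intro hj1
    have hj : j ≤ k0 := by omega
    have hidx : k0 - (j+1) + 1 = k0 - j := by omega
    have hstep := tb_step_down (u := u) hp0 hp1 hd0 hu0 (n := n) (j := k0 - (j+1))
      (by omega) (by
        have : ((k0 - (j+1) : ℕ):ℝ) + 1 ≤ (k0:ℝ) := by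
          have : (k0 - (j+1) : ℕ) + 1 ≤ k0 := by omega
          exact_mod_cast this
        linarith)
    rw [hidx] at hstep
    calc (n.choose (k0-(j+1)) : ℝ) * (p*u)^(k0-(j+1)) * ((1-p)*d)^(n-(k0-(j+1)))
        ≤ (d/u) * ((n.choose (k0-j) : ℝ) * (p*u)^(k0-j) * ((1-p)*d)^(n-(k0-j))) := hstep
      _ ≤ (d/u) * ((d/u)^j * ((n.choose k0 : ℝ) * (p*u)^k0 * ((1-p)*d)^(n-k0))) := by
          apply mul_le_mul_of_nonneg_left (ih hj) (by positivity)
      _ = (d/u)^(j+1) * ((n.choose k0 : ℝ) * (p*u)^k0 * ((1-p)*d)^(n-k0)) := by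
          rw [pow_succ]; ring

lemma sb_lower (hp0 : 0 < p) (hp1 : p < 1) {n k0 : ℕ} (hk0 : (k0:ℝ) ≤ (n:ℝ)*p) :
    ∀ j : ℕ, k0 + j ≤ n → ((j:ℝ)+1) ≤ (n:ℝ)*(p*(1-p)) →
      sb p n k0 * (1 - ((j:ℝ)*((j:ℝ)+1)/2)/((n:ℝ)*(p*(1-p)))) ≤ sb p n (k0+j) := by
  have hq0 : (0:ℝ) < 1 - p := by linarith
  have hs0 : 0 ≤ sb p n k0 := sb_nonneg hp0 hp1 n k0
  intro j
  induction j with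
  | zero => intro _ _; simp
  | succ j ih =>
    intro hjn hjc
    push_cast at hjc
    set c : ℝ := (n:ℝ)*(p*(1-p)) with hc
    have hj0 : (0:ℝ) ≤ (j:ℝ) := Nat.cast_nonneg j
    have hcpos : 0 < c := by linarith
    have hjc' : ((j:ℝ)+1) ≤ c := by linarith
    have ihh := ih (by omega) hjc'
    set x : ℝ := ((j:ℝ)+1)/c with hxdef
    have hx0 : 0 ≤ x := by positivity
    have hx1 : x ≤ 1 := by
      rw [hxdef, div_le_one hcpos]; linarith
    have hcast : ((k0 + j : ℕ):ℝ) = (k0:ℝ) + j := by push_cast; ring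
    have hxineq : (1 - x) * (((k0+j:ℕ):ℝ)+1) * (1-p) ≤ ((n:ℝ) - ((k0+j:ℕ):ℝ)) * p := by
      rw [hcast]
      have hone : 1 - x = (c - ((j:ℝ)+1))/c := by
        rw [hxdef]; field_simp
      rw [hone, div_mul_eq_mul_div, div_mul_eq_mul_div, div_le_iff₀ hcpos]
      have h2 : 0 ≤ c - ((j:ℝ)+1) := by linarith
      rw [hc]; rw [hc] at h2
      have h4 : (0:ℝ) < p := hp0
      have h5 : (0:ℝ) < 1-p := hq0
      have h6 : (0:ℝ) ≤ (n:ℝ) := Nat.cast_nonneg n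
      have hNpK : (0:ℝ) ≤ (n:ℝ)*p - k0 := by linarith
      calc ((n:ℝ)*(p*(1-p)) - ((j:ℝ)+1)) * ((k0:ℝ) + (j:ℝ) + 1) * (1-p)
          ≤ ((n:ℝ)*(p*(1-p)) - ((j:ℝ)+1)) * ((n:ℝ)*p + (j:ℝ) + 1) * (1-p) := by
            nlinarith [mul_nonneg (mul_nonneg h2 h5.le) hNpK]
        _ ≤ ((n:ℝ)*(1-p) - (j:ℝ)) * p * ((n:ℝ)*(p*(1-p))) := by
            nlinarith [mul_nonneg (mul_nonneg (mul_nonneg h6 h4.le) h4.le) h5.le,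
              mul_nonneg (mul_nonneg (by positivity : (0:ℝ) ≤ (j:ℝ)+1) (by positivity : (0:ℝ) ≤ (j:ℝ)+1)) h5.le]
        _ ≤ ((n:ℝ) - ((k0:ℝ) + (j:ℝ))) * p * ((n:ℝ)*(p*(1-p))) := by
            nlinarith [mul_nonneg hNpK (mul_nonneg h4.le (mul_nonneg (mul_nonneg h6 h4.le) h5.le))]
    have hstep := sb_step_up hp0 hp1 (n := n) (k := k0+j) (by omega) hx0 hxineq
    have hchain : sb p n k0 * (1 - (((j:ℝ)+1)*(((j:ℝ)+1)+1)/2)/c) ≤ sb p n (k0+j) * (1-x) := by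
      have hB1 : (1 - ((j:ℝ)*((j:ℝ)+1)/2)/c) ≤ 1 := by
        have : 0 ≤ ((j:ℝ)*((j:ℝ)+1)/2)/c := by positivity
        linarith
      have hBx : (1 - (((j:ℝ)+1)*(((j:ℝ)+1)+1)/2)/c)
          = (1 - ((j:ℝ)*((j:ℝ)+1)/2)/c) - x := by
        rw [hxdef]; field_simp; ring
      rw [hBx]
      calc sb p n k0 * ((1 - ((j:ℝ)*((j:ℝ)+1)/2)/c) - x)
          ≤ sb p n k0 * ((1 - ((j:ℝ)*((j:ℝ)+1)/2)/c) * (1-x)) := by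
            apply mul_le_mul_of_nonneg_left _ hs0
            nlinarith [hB1, hx0]
        _ = (sb p n k0 * (1 - ((j:ℝ)*((j:ℝ)+1)/2)/c)) * (1-x) := by ring
        _ ≤ sb p n (k0+j) * (1-x) := by
            apply mul_le_mul_of_nonneg_right ihh (by linarith)
    have : k0 + (j+1) = (k0+j) + 1 := by omega
    rw [this]
    push_cast
    calc sb p n k0 * (1 - (((j:ℝ)+1)*(((j:ℝ)+1)+1)/2)/c) ≤ sb p n (k0+j) * (1-x) := hchain
      _ ≤ sb p n ((k0+j)+1) := hstep

lemma tendsto_sqrt_mul (a : ℝ) (ha : 0 < a) :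
    Tendsto (fun n : ℕ => Real.sqrt ((n:ℝ)*a)) atTop atTop := by
  apply Filter.tendsto_atTop_atTop.mpr
  intro b
  refine ⟨⌈(max b 0)^2/a⌉₊, fun m hm => ?_⟩
  have h0 : ((max b 0)^2/a : ℝ) ≤ (m:ℝ) := le_trans (Nat.le_ceil _) (by exact_mod_cast hm)
  have h1 : ((max b 0)^2 : ℝ) ≤ (m:ℝ)*a := by
    rw [div_le_iff₀ ha] at h0; linarith
  calc b ≤ max b 0 := le_max_left _ _
    _ = Real.sqrt ((max b 0)^2) := (Real.sqrt_sq (le_max_right _ _)).symm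
    _ ≤ Real.sqrt ((m:ℝ)*a) := Real.sqrt_le_sqrt h1

set_option maxHeartbeats 2000000 in
lemma sb_max (hp0 : 0 < p) (hp1 : p < 1) :
    ∀ᶠ n : ℕ in atTop, sb p n ⌊(n:ℝ)*p⌋₊ ≤ (8/3) / Real.sqrt ((n:ℝ)*(p*(1-p))) := by
  have hq0 : (0:ℝ) < 1 - p := by linarith
  have hpq : (0:ℝ) < p*(1-p) := by positivity
  have ht1 : Tendsto (fun n : ℕ => Real.sqrt ((n:ℝ)*(p*(1-p)))) atTop atTop :=
    tendsto_sqrt_mul _ hpq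
  have ht2 : Tendsto (fun n : ℕ => Real.sqrt ((n:ℝ)*1)) atTop atTop :=
    tendsto_sqrt_mul _ one_pos
  have ht2' : Tendsto (fun n : ℕ => Real.sqrt ((n:ℝ))) atTop atTop := by
    simpa using ht2
  filter_upwards [ht1.eventually_ge_atTop 8, ht2'.eventually_ge_atTop (4/(1-p)),
    ht2'.eventually_ge_atTop 1] with n h8 h4q h1n
  set N : ℝ := (n:ℝ) with hN
  have hN0 : 0 ≤ N := Nat.cast_nonneg n
  set c : ℝ := N*(p*(1-p)) with hcdef
  set sc : ℝ := Real.sqrt c with hscdef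
  have hc0 : 0 ≤ c := by positivity
  have hcsq : sc*sc = c := Real.mul_self_sqrt hc0
  have hsc0 : 0 < sc := by linarith
  set k0 : ℕ := ⌊N*p⌋₊ with hk0def
  set M : ℕ := ⌊sc/2⌋₊ with hMdef
  have hk0 : (k0:ℝ) ≤ N*p := Nat.floor_le (by positivity)
  have hM : (M:ℝ) ≤ sc/2 := Nat.floor_le (by positivity)
  have hM1 : sc/2 < (M:ℝ)+1 := Nat.lt_floor_add_one _
  have hM4 : (4:ℝ) ≤ (M:ℝ) := by
    have : (4:ℕ) ≤ M := Nat.le_floor (by push_cast; linarith)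
    exact_mod_cast this
  have hNsq : Real.sqrt N * Real.sqrt N = N := Real.mul_self_sqrt hN0
  have hscn : sc ≤ Real.sqrt N := Real.sqrt_le_sqrt (by
    nlinarith [mul_nonneg hN0 (sq_nonneg (p-1/2)), hN0])
  have hq4 : 4 ≤ (1-p) * Real.sqrt N := by
    rw [div_le_iff₀ hq0] at h4q; linarith
  have hk0Mn : k0 + M ≤ n := by
    have hr : (k0:ℝ) + (M:ℝ) ≤ N := by
      have h6 : 4*Real.sqrt N ≤ (1-p)*(Real.sqrt N*Real.sqrt N) := by
        have := mul_le_mul_of_nonneg_right hq4 (Real.sqrt_nonneg N)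
        linarith [this]
      have h7 : (1-p)*(Real.sqrt N*Real.sqrt N) = N - N*p := by rw [hNsq]; ring
      have h5 : Real.sqrt N / 2 ≤ N - N*p := by
        rw [h7] at h6; linarith [h1n]
      have h9 : (k0:ℝ) + (M:ℝ) ≤ N*p + Real.sqrt N/2 := by linarith
      linarith
    have : ((k0 + M : ℕ) : ℝ) ≤ (n:ℝ) := by push_cast; linarith
    exact_mod_cast this
  have hlow : ∀ j ∈ Finset.range (M+1), sb p n k0 * (3/4) ≤ sb p n (k0+j) := by
    intro j hj
    have hjM : j ≤ M := by
      have := Finset.mem_range.mp hj; omega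
    have hjM' : (j:ℝ) ≤ (M:ℝ) := by exact_mod_cast hjM
    have hscc : sc ≤ c := by
      have := mul_nonneg (by linarith : (0:ℝ) ≤ sc - 1) hsc0.le
      nlinarith [this]
    have hjc : ((j:ℝ)+1) ≤ c := by linarith
    have h1 := sb_lower hp0 hp1 hk0 j (by omega) hjc
    refine le_trans ?_ h1
    apply mul_le_mul_of_nonneg_left ?_ (sb_nonneg hp0 hp1 n k0)
    have hMa : (M:ℝ)+1 ≤ sc := by linarith
    have hMsq : (M:ℝ)*((M:ℝ)+1) ≤ c/2 := by
      have := mul_le_mul hM hMa (by positivity) (by positivity)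
      nlinarith [this]
    have hjj : (j:ℝ)*((j:ℝ)+1)/2 ≤ c/4 := by
      have := mul_le_mul hjM' (by linarith : (j:ℝ)+1 ≤ (M:ℝ)+1) (by positivity) (by positivity)
      nlinarith [this]
    have : ((j:ℝ)*((j:ℝ)+1)/2)/c ≤ 1/4 := by
      rw [div_le_iff₀ (by linarith : (0:ℝ) < c)]; linarith
    linarith
  have hsum : ((M:ℝ)+1) * (sb p n k0 * (3/4)) ≤ 1 := by
    have h1 : ∑ _j ∈ Finset.range (M+1), (sb p n k0 * (3/4))
        ≤ ∑ j ∈ Finset.range (M+1), sb p n (k0+j) := Finset.sum_le_sum hlow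
    rw [Finset.sum_const, Finset.card_range, nsmul_eq_mul] at h1
    have h2 : ∑ j ∈ Finset.range (M+1), sb p n (k0+j)
        = ∑ k ∈ Finset.Ico k0 (k0+(M+1)), sb p n k := by
      rw [Finset.sum_Ico_eq_sum_range]; simp
    have h3 : ∑ k ∈ Finset.Ico k0 (k0+(M+1)), sb p n k
        ≤ ∑ k ∈ Finset.range (n+1), sb p n k := by
      apply Finset.sum_le_sum_of_subset_of_nonneg
      · intro k hk
        simp only [Finset.mem_Ico, Finset.mem_range] at *
        omega
      · intro k _ _; exact sb_nonneg hp0 hp1 n k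
    rw [sb_sum hp0 hp1 n] at h3
    have hcast : (((M+1:ℕ)):ℝ) = (M:ℝ)+1 := by push_cast; ring
    rw [hcast] at h1
    linarith
  have hsb0 := sb_nonneg hp0 hp1 n k0
  rw [le_div_iff₀ hsc0]
  have hsc2M : sc ≤ 2*((M:ℝ)+1) := by linarith
  linarith [mul_le_mul_of_nonneg_left hsc2M hsb0, hsum]

end Boundary

theorem losing_contribution_tendsto_zero_biased (u d p : ℝ)
    (hp0 : 0 < p) (hp1 : p < 1)
    (hd0 : 0 < d) (hd1 : d ≤ 1) (hu : 1 ≤ u) (hne : u ≠ d) :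
    Tendsto (fun n : ℕ => A n u d p) atTop (nhds 0) := by
  have hq0 : (0:ℝ) < 1 - p := by linarith
  have hu0 : (0:ℝ) < u := lt_of_lt_of_le one_pos hu
  by_cases hL : p * Real.log u + (1 - p) * Real.log d = 0
  · -- boundary case
    have hd1' : d < 1 := by
      rcases lt_or_eq_of_le hd1 with h | h
      · exact h
      · exfalso
        rw [h, Real.log_one, mul_zero, add_zero, mul_eq_zero] at hL
        rcases hL with h' | h'
        · linarith
        · rcases Real.log_eq_zero.mp h' with h'' | h'' | h'' <;>
            [linarith; exact hne (h'' ▸ h ▸ rfl); linarith]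
    have hu1 : 1 < u := by
      rcases lt_or_eq_of_le hu with h | h
      · exact h
      · exfalso
        rw [← h, Real.log_one, mul_zero, zero_add, mul_eq_zero] at hL
        rcases hL with h' | h'
        · linarith
        · rcases Real.log_eq_zero.mp h' with h'' | h'' | h'' <;> [linarith; linarith; linarith]
    have hc := log_ud_pos hd0 hd1 hu hne
    have hktilde : ∀ n : ℕ, ktilde n u d = ⌊(n:ℝ)*p⌋₊ := by
      intro n
      unfold ktilde
      congr 1
      rw [mul_div_assoc]
      congr 1
      rw [div_eq_iff hc.ne', one_div, Real.log_inv, Real.log_div hu0.ne' hd0.ne']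
      linear_combination -hL
    have hdu1 : d/u < 1 := by rw [div_lt_one hu0]; linarith
    have hdu0 : (0:ℝ) ≤ d/u := by positivity
    have hinv0 : (0:ℝ) ≤ (1 - d/u)⁻¹ := by
      rw [inv_nonneg]; linarith
    have hgeom : ∀ n : ℕ, A n u d p ≤ (1 - d/u)⁻¹ * sb p n ⌊(n:ℝ)*p⌋₊ := by
      intro n
      have hk0n : ktilde n u d ≤ n := ktilde_le hd0 hd1 hu hne n
      have hk0np : ((ktilde n u d : ℕ):ℝ) ≤ (n:ℝ)*p := by
        rw [hktilde n]; exact Nat.floor_le (by positivity)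
      have hrefl := Finset.sum_range_reflect
        (fun k => (n.choose k : ℝ) * (p*u)^k * ((1-p)*d)^(n-k)) (ktilde n u d + 1)
      simp only [Nat.add_sub_cancel] at hrefl
      have hA : A n u d p = ∑ j ∈ Finset.range (ktilde n u d + 1),
          (n.choose (ktilde n u d - j) : ℝ) * (p*u)^(ktilde n u d - j)
            * ((1-p)*d)^(n-(ktilde n u d - j)) := by
        unfold A; rw [hrefl]
      rw [hA]
      set T : ℝ := (n.choose (ktilde n u d) : ℝ) * (p*u)^(ktilde n u d)
          * ((1-p)*d)^(n-(ktilde n u d)) with hT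
      have hT0 : 0 ≤ T := by rw [hT]; positivity
      have hsum1 : ∑ j ∈ Finset.range (ktilde n u d + 1),
          (n.choose (ktilde n u d - j) : ℝ) * (p*u)^(ktilde n u d - j)
            * ((1-p)*d)^(n-(ktilde n u d - j))
          ≤ ∑ j ∈ Finset.range (ktilde n u d + 1), (d/u)^j * T := by
        apply Finset.sum_le_sum
        intro j hj
        exact tb_geom hp0 hp1 hd0 hu0 hk0n hk0np j (by
          have := Finset.mem_range.mp hj; omega)
      have hsum2 : ∑ j ∈ Finset.range (ktilde n u d + 1), (d/u)^j * T
          ≤ (1 - d/u)⁻¹ * T := by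
        rw [← Finset.sum_mul]
        apply mul_le_mul_of_nonneg_right (my_geom_le hdu0 hdu1 _) hT0
      have hTs : T ≤ sb p n ⌊(n:ℝ)*p⌋₊ := by
        have hT' : T = sb p n (ktilde n u d) * (u^(ktilde n u d) * d^(n - ktilde n u d)) := by
          rw [hT]; unfold sb; rw [mul_pow, mul_pow]; ring
        rw [← hktilde n]
        calc T = sb p n (ktilde n u d) * (u^(ktilde n u d) * d^(n - ktilde n u d)) := hT'
          _ ≤ sb p n (ktilde n u d) * 1 := by
              apply mul_le_mul_of_nonneg_left
                (pow_le_one_of_le_ktilde hd0 hd1 hu hne le_rfl)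
                (sb_nonneg hp0 hp1 n _)
          _ = sb p n (ktilde n u d) := mul_one _
      calc ∑ j ∈ Finset.range (ktilde n u d + 1),
          (n.choose (ktilde n u d - j) : ℝ) * (p*u)^(ktilde n u d - j)
            * ((1-p)*d)^(n-(ktilde n u d - j)) ≤ (1 - d/u)⁻¹ * T := le_trans hsum1 hsum2
        _ ≤ (1 - d/u)⁻¹ * sb p n ⌊(n:ℝ)*p⌋₊ := mul_le_mul_of_nonneg_left hTs hinv0
    apply squeeze_zero' (Filter.Eventually.of_forall (A_nonneg hp0 hp1 hd0 hu0))
    · filter_upwards [sb_max hp0 hp1] with n hsb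
      calc A n u d p ≤ (1 - d/u)⁻¹ * sb p n ⌊(n:ℝ)*p⌋₊ := hgeom n
        _ ≤ (1 - d/u)⁻¹ * ((8/3) / Real.sqrt ((n:ℝ)*(p*(1-p)))) :=
            mul_le_mul_of_nonneg_left hsb hinv0
    · have hpq : (0:ℝ) < p*(1-p) := by positivity
      have ht := tendsto_sqrt_mul (p*(1-p)) hpq
      have := Filter.Tendsto.div_atTop
        (tendsto_const_nhds : Tendsto (fun _ : ℕ => (1 - d/u)⁻¹ * (8/3)) atTop (nhds ((1 - d/u)⁻¹ * (8/3)))) ht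
      simpa [mul_div_assoc] using this
  · obtain ⟨θ, hθ, hlt⟩ := exists_theta hp0 hp1 hd0 hd1 hu hne hL
    have hge : (0:ℝ) ≤ p * u ^ θ + (1 - p) * d ^ θ := by
      have h1 : (0:ℝ) < u ^ θ := Real.rpow_pos_of_pos hu0 θ
      have h2 : (0:ℝ) < d ^ θ := Real.rpow_pos_of_pos hd0 θ
      positivity
    exact squeeze_zero (A_nonneg hp0 hp1 hd0 hu0)
      (A_le_of_theta hp0 hp1 hd0 hd1 hu hne θ hθ)
      (tendsto_pow_atTop_nhds_zero_of_lt_one hge hlt)
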